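/- arXiv:2409.19162 — 7 statements merged into one kernel-verified Lean document; each statement's English description precedes it below -/
import Mathlib

section
/- Let r_1,…,r_m be nonnegative reals and let r_{(1)} ≤ … ≤ r_{(m)} denote them in sorted order. Fix m₁ ≤ m, set p_fail = (m - m₁)/m, and let r̃_{(1)} ≤ … ≤ r̃_{(m₁)} denote the sorted values of r_1,…,r_{m₁}. If p_fail < p̃ < 1 - p_fail and m·p̃, m·(p̃ - p_fail) ∈ ℕ₊, then r̃_{(m(p̃ - p_fail))} ≤ r_{(m p̃)} ≤ r̃_{(m p̃)}. -/
/-- The `k`-th smallest element (1-indexed) of a multiset of reals. -/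
noncomputable def orderStat (s : Multiset ℝ) (k : ℕ) : ℝ :=
  (s.sort (· ≤ ·)).getD (k - 1) 0

private lemma sorted_getD_le {L : List ℝ} (hL : L.Pairwise (· ≤ ·)) {i : ℕ} {x : ℝ}
    (h : i + 1 ≤ L.countP (fun a => decide (a ≤ x))) : L.getD i 0 ≤ x := by
  have hlen : i < L.length := lt_of_lt_of_le h L.countP_le_length
  by_contra h'
  push_neg at h'
  rw [List.getD_eq_get _ _ (⟨i, hlen⟩ : Fin L.length)] at h'
  have hdrop : (L.drop i).countP (fun a => decide (a ≤ x)) = 0 := by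
    rw [List.countP_eq_zero]
    intro a ha
    obtain ⟨t, rfl⟩ := List.get_of_mem ha
    have ht : (t : ℕ) < L.length - i := by simpa using t.isLt
    have hlt : i + (t : ℕ) < L.length := by omega
    have heq : (L.drop i).get t = L.get ⟨i + t, hlt⟩ := by
      simp only [List.get_eq_getElem]; rw [List.getElem_drop]
    have hle : L.get ⟨i, hlen⟩ ≤ (L.drop i).get t := by
      rw [heq]
      exact hL.rel_get_of_le (by simp : (⟨i, hlen⟩ : Fin L.length) ≤ ⟨i + t, hlt⟩)
    simp only [decide_eq_true_eq]
    push_neg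
    exact lt_of_lt_of_le h' hle
  have : L.countP (fun a => decide (a ≤ x)) ≤ i := by
    conv_lhs => rw [← List.take_append_drop i L, List.countP_append]
    calc _ ≤ (L.take i).length + (L.drop i).countP (fun a => decide (a ≤ x)) :=
            Nat.add_le_add_right (L.take i).countP_le_length _
      _ = (L.take i).length := by rw [hdrop, Nat.add_zero]
      _ ≤ i := by simp [List.length_take]
  omega

private lemma le_countP_sorted {L : List ℝ} (hL : L.Pairwise (· ≤ ·)) {i : ℕ}
    (hlen : i < L.length) :
    i + 1 ≤ L.countP (fun a => decide (a ≤ L.getD i 0)) := by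
  rw [List.getD_eq_get _ _ (⟨i, hlen⟩ : Fin L.length)]
  have hsub : (L.take (i + 1)).Sublist L := List.take_sublist _ _
  have h1 : (L.take (i + 1)).countP (fun a => decide (a ≤ L.get ⟨i, hlen⟩)) = i + 1 := by
    rw [List.countP_eq_length.2, List.length_take, Nat.min_eq_left hlen]
    intro a ha
    obtain ⟨t, rfl⟩ := List.get_of_mem ha
    have ht : (t : ℕ) < min (i + 1) L.length := by simpa using t.isLt
    have hlt : (t : ℕ) < L.length := by omega
    have heq : (L.take (i + 1)).get t = L.get ⟨t, hlt⟩ := by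
      simp only [List.get_eq_getElem]; rw [List.getElem_take]
    simp only [decide_eq_true_eq, heq]
    exact hL.rel_get_of_le (by simp; omega : (⟨(t:ℕ), hlt⟩ : Fin L.length) ≤ ⟨i, hlen⟩)
  calc i + 1 = _ := h1.symm
    _ ≤ _ := hsub.countP_le

private lemma orderStat_le_of_count {s : Multiset ℝ} {k : ℕ} (hk : 0 < k) {x : ℝ}
    (h : k ≤ (s.filter (· ≤ x)).card) : orderStat s k ≤ x := by
  have hL : (s.sort (· ≤ ·) : Multiset ℝ) = s := Multiset.sort_eq _ _
  have hcount : (s.filter (· ≤ x)).card = (s.sort (· ≤ ·)).countP (fun a => decide (a ≤ x)) := by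
    rw [← hL]; rw [Multiset.filter_coe]; simp [List.countP_eq_length_filter]
  apply sorted_getD_le (Multiset.pairwise_sort _ _)
  omega

private lemma count_orderStat_ge {s : Multiset ℝ} {k : ℕ} (hk : 0 < k) (hks : k ≤ Multiset.card s) :
    k ≤ (s.filter (· ≤ orderStat s k)).card := by
  have hL : (s.sort (· ≤ ·) : Multiset ℝ) = s := Multiset.sort_eq _ _
  have hlen : (s.sort (· ≤ ·)).length = Multiset.card s := by
    rw [← hL]; simp
  have hcount : (s.filter (· ≤ orderStat s k)).card
      = (s.sort (· ≤ ·)).countP (fun a => decide (a ≤ orderStat s k)) := by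
    rw [← hL]; rw [Multiset.filter_coe]; simp [List.countP_eq_length_filter]
  have := le_countP_sorted (Multiset.pairwise_sort s (· ≤ ·)) (i := k - 1) (by omega)
  rw [hcount]
  unfold orderStat at *
  omega


/-- The `mp̃`-th order statistic of all residuals is sandwiched between the
`m(p̃ - p_fail)`-th and `mp̃`-th order statistics of the uncorrupted residuals. -/
theorem quantile_sandwich {m m₁ : ℕ} (hm : 0 < m) (hm₁ : m₁ ≤ m)
    (r : Fin m → ℝ) (hr : ∀ i, 0 ≤ r i)
    (pfail ptil : ℝ) (hpf : pfail = ((m : ℝ) - m₁) / m)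
    (h1 : pfail < ptil) (h2 : ptil < 1 - pfail)
    (k j : ℕ) (hk : 0 < k) (hkk : (m : ℝ) * ptil = k)
    (hj : 0 < j) (hjj : (m : ℝ) * (ptil - pfail) = j) :
    orderStat ((Finset.univ.filter (fun i : Fin m => (i : ℕ) < m₁)).val.map r) j ≤
      orderStat (Finset.univ.val.map r) k ∧
    orderStat (Finset.univ.val.map r) k ≤
      orderStat ((Finset.univ.filter (fun i : Fin m => (i : ℕ) < m₁)).val.map r) k := by
  set s : Multiset ℝ := Finset.univ.val.map r with hs
  set t : Multiset ℝ := (Finset.univ.filter (fun i : Fin m => (i : ℕ) < m₁)).val.map r with ht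
  have hmr : (0:ℝ) < m := by exact_mod_cast hm
  -- arithmetic facts
  have hpfm : (m : ℝ) * pfail = (m : ℝ) - m₁ := by
    rw [hpf]; field_simp
  have hkm₁ : k < m₁ := by
    have : (k : ℝ) < m₁ := by
      have := mul_lt_mul_of_pos_left h2 hmr
      rw [hkk] at this
      nlinarith [hpfm]
    exact_mod_cast this
  have hjk : j + (m - m₁) = k := by
    have : (j : ℝ) + ((m : ℝ) - m₁) = k := by nlinarith [hpfm]
    have h' : (j : ℝ) + ((m - m₁ : ℕ) : ℝ) = k := by
      rw [Nat.cast_sub hm₁]; exact this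
    exact_mod_cast h'
  -- multiset facts
  have hts : t ≤ s := Multiset.map_le_map (Finset.val_le_iff.2 (Finset.filter_subset _ _))
  have hcs : Multiset.card s = m := by simp [hs]
  have hct : Multiset.card t = m₁ := by
    rw [ht, Multiset.card_map]
    have : (Finset.univ.filter (fun i : Fin m => (i : ℕ) < m₁)) =
        Finset.map (Fin.castLEEmb hm₁) Finset.univ := by
      ext i
      simp only [Finset.mem_filter, Finset.mem_univ, true_and, Finset.mem_map,
        Fin.castLEEmb_apply]
      constructor
      · intro h; exact ⟨⟨i, h⟩, rfl⟩
      · rintro ⟨a, rfl⟩; exact a.isLt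
    rw [this]; simp
  constructor
  · -- lower bound: orderStat t j ≤ orderStat s k
    apply orderStat_le_of_count hj
    set x := orderStat s k
    have h1' : k ≤ (s.filter (· ≤ x)).card :=
      count_orderStat_ge hk (by omega)
    have h2' : (s.filter (· ≤ x)).card ≤ (t.filter (· ≤ x)).card + (m - m₁) := by
      have hsub : s = t + (s - t) := (add_tsub_cancel_of_le hts).symm
      have : (s.filter (· ≤ x)) = (t.filter (· ≤ x)) + ((s - t).filter (· ≤ x)) := by
        conv_lhs => rw [hsub]
        rw [Multiset.filter_add]
      rw [this, Multiset.card_add]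
      have : Multiset.card ((s - t).filter (· ≤ x)) ≤ Multiset.card (s - t) :=
        Multiset.card_le_card (Multiset.filter_le _ _)
      have hcd : Multiset.card (s - t) = m - m₁ := by
        rw [Multiset.card_sub hts, hcs, hct]
      omega
    omega
  · -- upper bound
    apply orderStat_le_of_count hk
    have h1' : k ≤ (t.filter (· ≤ orderStat t k)).card :=
      count_orderStat_ge hk (by omega)
    have h2' : (t.filter (· ≤ orderStat t k)).card ≤ (s.filter (· ≤ orderStat t k)).card :=
      Multiset.card_le_card (Multiset.filter_le_filter _ hts)
    omega
end

section
/- Let F: ℝⁿ → ℝ be L-weakly convex in the sense that F(x) - F(x̄) - ⟨x - x̄, v⟩ + (L/2)‖x - x̄‖₂² ≥ 0 for all x, x̄ ∈ ℝⁿ and v ∈ ∂F(x̄), and satisfy sharpness F(x) - F(x_⋆) ≥ λ_s Δ(x). Consider one step x⁺ = x - α ξ/‖ξ‖₂² with ξ ∈ ∂F(x), ξ ≠ 0, and α = e·(F(x) - F(x̂)) for some e ∈ (0,2), where x̂ ∈ {x_⋆, -x_⋆} attains Δ(x) = ‖x - x̂‖₂. Then ‖x⁺ - x̂‖₂² ≤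 ‖x - x̂‖₂² + (e(F(x)-F(x̂))/‖ξ‖₂²)·(L‖x - x̂‖₂² - (2-e)(F(x) - F(x̂))). -/
open scoped RealInnerProductSpace

/-- One-step descent inequality for the Polyak-type subgradient update. -/
theorem subgrad_one_step {n : ℕ} (F : EuclideanSpace ℝ (Fin n) → ℝ)
    (xstar xhat x xplus ξ : EuclideanSpace ℝ (Fin n)) (L lams e α : ℝ)
    (hL : 0 < L) (hlam : 0 < lams)
    (hξ : ξ ≠ 0)
    (hwc : ∀ y, F y - F x - ⟪y - x, ξ⟫ + L / 2 * ‖y - x‖ ^ 2 ≥ 0)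
    (hsharp : ∀ y, F y - F xstar ≥ lams * min ‖y - xstar‖ ‖y + xstar‖)
    (hhat : xhat = xstar ∨ xhat = -xstar)
    (hΔ : min ‖x - xstar‖ ‖x + xstar‖ = ‖x - xhat‖)
    (hFhat : F xhat = F xstar)
    (he0 : 0 < e) (he2 : e < 2)
    (hα : α = e * (F x - F xhat))
    (hx : xplus = x - (α / ‖ξ‖ ^ 2) • ξ) :
    ‖xplus - xhat‖ ^ 2 ≤ ‖x - xhat‖ ^ 2 +
      (e * (F x - F xhat) / ‖ξ‖ ^ 2) *
        (L * ‖x - xhat‖ ^ 2 - (2 - e) * (F x - F xhat)) := by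
  have hξ2 : (0:ℝ) < ‖ξ‖ ^ 2 := pow_pos (norm_pos_iff.mpr hξ) 2
  set D := F x - F xhat with hDdef
  have hD : 0 ≤ D := by
    have h1 := hsharp x
    rw [hΔ] at h1
    have : 0 ≤ lams * ‖x - xhat‖ := by positivity
    simp only [hDdef, hFhat]
    linarith
  have hip : ⟪x - xhat, ξ⟫ ≥ D - L / 2 * ‖x - xhat‖ ^ 2 := by
    have h := hwc xhat
    have hswap : ⟪xhat - x, ξ⟫ = -⟪x - xhat, ξ⟫ := by
      rw [← inner_neg_left]; congr 1; abel
    rw [hswap] at h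
    have hnorm : ‖xhat - x‖ = ‖x - xhat‖ := norm_sub_rev _ _
    rw [hnorm] at h
    simp only [hDdef]; linarith
  set c := α / ‖ξ‖ ^ 2 with hcdef
  have hexpand : ‖xplus - xhat‖ ^ 2 =
      ‖x - xhat‖ ^ 2 - 2 * c * ⟪x - xhat, ξ⟫ + c ^ 2 * ‖ξ‖ ^ 2 := by
    have : xplus - xhat = (x - xhat) - c • ξ := by rw [hx]; abel
    rw [this, norm_sub_sq_real, real_inner_smul_right, norm_smul]
    simp [mul_pow, abs_of_nonneg, Real.norm_eq_abs, sq_abs]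
    ring
  have hc : c = e * D / ‖ξ‖ ^ 2 := by rw [hcdef, hα]
  have hcnn : 0 ≤ c := by rw [hc]; positivity
  rw [hexpand, hc]
  have key : (e * D / ‖ξ‖ ^ 2) ^ 2 * ‖ξ‖ ^ 2 = (e * D) ^ 2 / ‖ξ‖ ^ 2 := by
    field_simp
  rw [key]
  rw [hc] at hcnn
  have h2 : 2 * (e * D / ‖ξ‖ ^ 2) * ⟪x - xhat, ξ⟫ ≥
      2 * (e * D / ‖ξ‖ ^ 2) * (D - L / 2 * ‖x - xhat‖ ^ 2) := by
    apply mul_le_mul_of_nonneg_left hip (by positivity)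
  have hfinal : ‖x - xhat‖ ^ 2 - 2 * (e * D / ‖ξ‖ ^ 2) * (D - L / 2 * ‖x - xhat‖ ^ 2)
      + (e * D) ^ 2 / ‖ξ‖ ^ 2 =
      ‖x - xhat‖ ^ 2 + e * D / ‖ξ‖ ^ 2 * (L * ‖x - xhat‖ ^ 2 - (2 - e) * D) := by
    field_simp; ring
  linarith
end

section
/- Suppose 0 < c₁ ≤ c₂ < 2, λ_s > 0, L > 0 with λ_s ≤ L‖x_⋆‖₂/2, and suppose at each step k: ‖x^{k+1} - x̂‖₂² ≤ ‖x^k - x̂‖₂² - (2 λ_s e_k (2 - e_k)/(9 L² ‖x_⋆‖₂²)) · (F(x^k) - F(x̂)) · ‖x^k - x̂‖₂ with e_k ∈ [c₁, c₂] and F(x^k) - F(x̂) ≥ λ_s ‖x^k - x̂‖₂. Then with c = max{|1-c₁|, |1-c₂|}, ‖x^k - x̂‖₂ ≤ (√(1 - 2λ_s²(1-c²)/(9L²‖x_⋆‖₂²)))^k · ‖x^0 - x̂‖₂ for all k ∈ ℕ. -/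
/-!
Since `e (2 - e) = 1 - (1 - e)²` and `|1 - e| ≤ c` on `[c₁, c₂]`, the sharpness bound
`F(x^k) - F(x̂) ≥ λ_s ‖x^k - x̂‖` turns the descent inequality into the contraction
`‖x^{k+1} - x̂‖² ≤ ρ ‖x^k - x̂‖²` with `ρ = 1 - 2λ_s²(1 - c²)/(9L²‖x_⋆‖²)`. Taking square roots
gives a factor `√ρ` per step (if `ρ < 0`, then `√ρ = 0` and the contraction forces the next
distance to vanish), and iterating it gives the geometric rate.
-/

lemma one_sub_max_abs_sq_le_mul_two_sub {c₁ c₂ e : ℝ} (he : e ∈ Set.Icc c₁ c₂) :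
    1 - (max |1 - c₁| |1 - c₂|) ^ 2 ≤ e * (2 - e) := by
  have h_abs : |1 - e| ≤ max |1 - c₁| |1 - c₂| := by
    rw [abs_le]
    constructor
    · linarith [he.2, neg_abs_le (1 - c₂), le_max_right |1 - c₁| |1 - c₂|]
    · linarith [he.1, le_abs_self (1 - c₁), le_max_left |1 - c₁| |1 - c₂|]
  have h_sq : (1 - e) ^ 2 ≤ (max |1 - c₁| |1 - c₂|) ^ 2 :=
    sq_le_sq.mpr (h_abs.trans (le_abs_self _))
  linarith

lemma le_sqrt_mul_of_sq_le_mul_sq {a b ρ : ℝ} (hb : 0 ≤ b) (h : a ^ 2 ≤ ρ * b ^ 2) :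
    a ≤ √ρ * b :=
  calc a ≤ |a| := le_abs_self a
    _ = √(a ^ 2) := (Real.sqrt_sq_eq_abs a).symm
    _ ≤ √(ρ * b ^ 2) := Real.sqrt_le_sqrt h
    _ = √ρ * b := by rw [Real.sqrt_mul' ρ (sq_nonneg b), Real.sqrt_sq hb]

lemma sq_le_contraction_of_sharp {d d' g lam e κ D : ℝ} (hlam : 0 ≤ lam) (hD : 0 ≤ D)
    (hd : 0 ≤ d) (he : 0 ≤ e * (2 - e)) (hκ : κ ≤ e * (2 - e)) (hsharp : lam * d ≤ g)
    (hstep : d' ^ 2 ≤ d ^ 2 - 2 * lam * e * (2 - e) / D * g * d) :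
    d' ^ 2 ≤ (1 - 2 * lam ^ 2 * κ / D) * d ^ 2 := by
  have h_decrease : κ * (lam * d) * d ≤ e * (2 - e) * g * d := by
    have hlamd : 0 ≤ lam * d := mul_nonneg hlam hd
    gcongr
  calc d' ^ 2 ≤ d ^ 2 - 2 * lam / D * (e * (2 - e) * g * d) := by
        convert hstep using 2; ring
    _ ≤ d ^ 2 - 2 * lam / D * (κ * (lam * d) * d) := by gcongr
    _ = (1 - 2 * lam ^ 2 * κ / D) * d ^ 2 := by ring

theorem adasubgrad_linear_rate_general {n : ℕ} (F : EuclideanSpace ℝ (Fin n) → ℝ)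
    (xstar xhat : EuclideanSpace ℝ (Fin n))
    (x : ℕ → EuclideanSpace ℝ (Fin n)) (e : ℕ → ℝ)
    (c₁ c₂ lams L : ℝ)
    (hc1 : 0 < c₁) (hc2 : c₂ < 2)
    (hlam : 0 < lams)
    (he : ∀ k, e k ∈ Set.Icc c₁ c₂)
    (hstep : ∀ k, ‖x (k + 1) - xhat‖ ^ 2 ≤ ‖x k - xhat‖ ^ 2 -
      (2 * lams * e k * (2 - e k) / (9 * L ^ 2 * ‖xstar‖ ^ 2)) *
        (F (x k) - F xhat) * ‖x k - xhat‖)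
    (hsharp : ∀ k, F (x k) - F xhat ≥ lams * ‖x k - xhat‖) :
    ∀ k, ‖x k - xhat‖ ≤
      (Real.sqrt (1 - 2 * lams ^ 2 * (1 - (max |1 - c₁| |1 - c₂|) ^ 2) /
          (9 * L ^ 2 * ‖xstar‖ ^ 2))) ^ k * ‖x 0 - xhat‖ := by
  intro k
  refine le_geom (u := fun k => ‖x k - xhat‖) (Real.sqrt_nonneg _) k fun j _ =>
    le_sqrt_mul_of_sq_le_mul_sq (norm_nonneg _) ?_
  have he_nonneg : 0 ≤ e j * (2 - e j) :=
    mul_nonneg (by linarith [(he j).1]) (by linarith [(he j).2])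
  exact sq_le_contraction_of_sharp hlam.le (by positivity) (norm_nonneg _) he_nonneg
    (one_sub_max_abs_sq_le_mul_two_sub (he j)) (hsharp j) (hstep j)

/-- Linear convergence of the adaptive subgradient iterates. -/
theorem adasubgrad_linear_rate {n : ℕ} (F : EuclideanSpace ℝ (Fin n) → ℝ)
    (xstar xhat : EuclideanSpace ℝ (Fin n))
    (x : ℕ → EuclideanSpace ℝ (Fin n)) (e : ℕ → ℝ)
    (c₁ c₂ lams L : ℝ)
    (hc1 : 0 < c₁) (hc12 : c₁ ≤ c₂) (hc2 : c₂ < 2)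
    (hlam : 0 < lams) (hL : 0 < L)
    (hlamL : lams ≤ L * ‖xstar‖ / 2)
    (hhat : ‖xhat‖ = ‖xstar‖) (hxs : 0 < ‖xstar‖)
    (he : ∀ k, e k ∈ Set.Icc c₁ c₂)
    (hstep : ∀ k, ‖x (k + 1) - xhat‖ ^ 2 ≤ ‖x k - xhat‖ ^ 2 -
      (2 * lams * e k * (2 - e k) / (9 * L ^ 2 * ‖xstar‖ ^ 2)) *
        (F (x k) - F xhat) * ‖x k - xhat‖)
    (hsharp : ∀ k, F (x k) - F xhat ≥ lams * ‖x k - xhat‖) :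
    ∀ k, ‖x k - xhat‖ ≤
      (Real.sqrt (1 - 2 * lams ^ 2 * (1 - (max |1 - c₁| |1 - c₂|) ^ 2) /
          (9 * L ^ 2 * ‖xstar‖ ^ 2))) ^ k * ‖x 0 - xhat‖ :=
  adasubgrad_linear_rate_general F xstar xhat x e c₁ c₂ lams L hc1 hc2 hlam he hstep hsharp
end

section
/- Let H: ℝⁿ → ℝ be (1/t)-strongly convex with minimizer z_⋆, and let D: Λ → ℝ satisfy weak duality D(λ) ≤ H(z_⋆) for all λ ∈ Λ. If a pair (z, λ) satisfies the gap bound H(z) - D(λ) ≤ (ρ_h/(1+ρ_h))·(1/(4t))·‖z_⋆‖₂² for some ρ_h > 0, then (ρ_h/(2t))‖z‖₂² ≥ H(z) - D(λ). -/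
/-- Quadratic growth of a strongly convex function around its minimizer. -/
lemma strong_min_growth {E : Type*} [NormedAddCommGroup E] [InnerProductSpace ℝ E]
    {m : ℝ} {f : E → ℝ} (hf : StrongConvexOn Set.univ m f)
    {zs : E} (hmin : IsMinOn f Set.univ zs) (z : E) :
    m / 2 * ‖z - zs‖ ^ 2 ≤ f z - f zs := by
  obtain ⟨-, h⟩ := hf
  set φ := m / 2 * ‖z - zs‖ ^ 2 with hφ
  have key : ∀ a ∈ Set.Ioc (0:ℝ) 1, (1 - a) * φ ≤ f z - f zs := by
    intro a ha
    obtain ⟨ha0, ha1⟩ := ha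
    have hb0 : (0:ℝ) ≤ 1 - a := by linarith
    have := h (Set.mem_univ z) (Set.mem_univ zs) ha0.le hb0 (by ring)
    have hm : f zs ≤ f (a • z + (1 - a) • zs) := hmin (Set.mem_univ _)
    simp only [smul_eq_mul] at this
    have : a * ((1 - a) * φ) ≤ a * (f z - f zs) := by
      simp only [hφ]
      nlinarith [this, hm]
    exact le_of_mul_le_mul_left this ha0
  have hlim : Filter.Tendsto (fun a : ℝ => (1 - a) * φ) (nhdsWithin 0 (Set.Ioi 0))
      (nhds φ) := by
    have : Filter.Tendsto (fun a : ℝ => (1 - a) * φ) (nhds 0) (nhds ((1 - 0) * φ)) := by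
      exact (Filter.Tendsto.const_sub _ Filter.tendsto_id).mul_const _
    simpa using this.mono_left nhdsWithin_le_nhds
  refine le_of_tendsto hlim ?_
  filter_upwards [Ioc_mem_nhdsGT_of_mem (by simp : (0:ℝ) ∈ Set.Ico (0:ℝ) 1)] with a ha
  exact key a ha

/-- Key step in the inner-iteration bound under the high-accuracy condition:
a small duality gap relative to `‖z⋆‖²` implies the (HAC) stopping test. -/
theorem hac_from_gap {n : ℕ} {Λ : Type*} (H : EuclideanSpace ℝ (Fin n) → ℝ)
    (D : Λ → ℝ) (zstar z : EuclideanSpace ℝ (Fin n)) (lam : Λ)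
    (t ρh : ℝ) (ht : 0 < t) (hρ : 0 < ρh)
    (hsc : StrongConvexOn Set.univ (1 / t) H)
    (hmin : IsMinOn H Set.univ zstar)
    (hweak : ∀ μ : Λ, D μ ≤ H zstar)
    (hgap : H z - D lam ≤ (ρh / (1 + ρh)) * (1 / (4 * t)) * ‖zstar‖ ^ 2) :
    (ρh / (2 * t)) * ‖z‖ ^ 2 ≥ H z - D lam := by
  have hq := strong_min_growth hsc hmin z
  have hw := hweak lam
  have htri : ‖zstar‖ ≤ ‖z‖ + ‖z - zstar‖ := by
    calc ‖zstar‖ = ‖z - (z - zstar)‖ := by rw [sub_sub_cancel]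
    _ ≤ ‖z‖ + ‖z - zstar‖ := norm_sub_le _ _
  have hC : ‖zstar‖ ^ 2 ≤ 2 * ‖z‖ ^ 2 + 2 * ‖z - zstar‖ ^ 2 := by
    nlinarith [pow_le_pow_left₀ (norm_nonneg zstar) htri 2,
      sq_nonneg (‖z‖ - ‖z - zstar‖)]
  set A := ‖z‖ ^ 2
  set B := ‖z - zstar‖ ^ 2
  set C := ‖zstar‖ ^ 2
  have hA : 0 ≤ A := sq_nonneg _
  have hB : 0 ≤ B := sq_nonneg _
  have hC0 : 0 ≤ C := sq_nonneg _
  have h1ρ : 0 < 1 + ρh := by linarith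
  -- B ≤ 2 t g, g ≤ ρh C / (4 t (1+ρh)), C ≤ 2A + 2B  ⇒  g ≤ ρh A / (2 t)
  have hB' : B ≤ 2 * t * (H z - D lam) := by
    have : 1 / t / 2 * B ≤ H z - D lam := by linarith
    rw [div_div, div_mul_eq_mul_div, one_mul, div_le_iff₀ (by positivity)] at this
    linarith
  have hg' : (H z - D lam) * (4 * t * (1 + ρh)) ≤ ρh * C := by
    have h4 : (0:ℝ) < 4 * t * (1 + ρh) := by positivity
    have key : (ρh / (1 + ρh)) * (1 / (4 * t)) * C * (4 * t * (1 + ρh)) = ρh * C := by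
      field_simp
    have := mul_le_mul_of_nonneg_right hgap h4.le
    rw [key] at this
    exact this
  rw [ge_iff_le, div_mul_eq_mul_div, le_div_iff₀ (by positivity)]
  nlinarith [mul_le_mul_of_nonneg_left hB' hρ.le, mul_le_mul_of_nonneg_left hC
    (by positivity : (0:ℝ) ≤ ρh)]
end

section
/- Let G: ℝⁿ → ℝ be μ-strongly convex with minimizer z_⋆ and let ε(x) = G(x) - G(z_⋆). Then for any x, G(0) - G(x) + ε(x) ≥ (μ/2)‖z_⋆‖₂² ≥ (μ/4)‖x‖₂² - (μ/2)‖x - z_⋆‖₂², and since (μ/2)‖x - z_⋆‖₂² ≤ ε(x), it follows that G(0) - G(x) + 2ε(x) ≥ (μ/4)‖x‖₂². In particular, if ε(x) ≤ ρ_h·(μ/2)‖x‖₂² with ρ_h ∈ [0, 1/4), then (2ρ_h/(1 - 4ρ_h))·(G(0) - G(x)) ≥ (ρ_h μ/2)‖x‖₂² ≥ ε(x). -/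
lemma strong_growth {E : Type*} [NormedAddCommGroup E] [InnerProductSpace ℝ E]
    {μ : ℝ} {f : E → ℝ} (hsc : StrongConvexOn Set.univ μ f) {z : E}
    (hz : IsMinOn f Set.univ z) (x : E) :
    f z + μ / 2 * ‖x - z‖ ^ 2 ≤ f x := by
  set C : ℝ := μ / 2 * ‖x - z‖ ^ 2 with hC
  have key : ∀ t : ℝ, 0 < t → t ≤ 1 → (1 - t) * C ≤ f x - f z := by
    intro t ht ht1
    have h2 := hsc.2 (Set.mem_univ x) (Set.mem_univ z) (le_of_lt ht)
      (by linarith : (0:ℝ) ≤ 1 - t) (by ring)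
    have hmin' : f z ≤ f (t • x + (1 - t) • z) := hz (Set.mem_univ _)
    have : f z ≤ t * f x + (1 - t) * f z - t * (1 - t) * C := by
      simpa [smul_eq_mul, hC] using hmin'.trans h2
    nlinarith
  have htend : Filter.Tendsto (fun t : ℝ => (1 - t) * C) (nhdsWithin 0 (Set.Ioi 0)) (nhds C) := by
    have : Filter.Tendsto (fun t : ℝ => (1 - t) * C) (nhds 0) (nhds ((1 - 0) * C)) :=
      (continuous_const.sub continuous_id).mul continuous_const |>.tendsto 0
    simpa using this.mono_left nhdsWithin_le_nhds
  have hle : C ≤ f x - f z := by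
    refine le_of_tendsto htend ?_
    filter_upwards [Ioc_mem_nhdsGT_of_mem (by norm_num : (0:ℝ) ∈ Set.Ico 0 1)] with t ht
    exact key t ht.1 ht.2
  linarith

/-- HAC-exact implies LAC-exact with `ρ_l = 2ρ_h/(1-4ρ_h)` for a strongly convex model. -/
theorem hac_implies_lac {n : ℕ} (G : EuclideanSpace ℝ (Fin n) → ℝ)
    (zstar : EuclideanSpace ℝ (Fin n)) (μ : ℝ) (hμ : 0 < μ)
    (hsc : StrongConvexOn Set.univ μ G)
    (hmin : IsMinOn G Set.univ zstar)
    (ε : EuclideanSpace ℝ (Fin n) → ℝ) (hε : ∀ x, ε x = G x - G zstar)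
    (x : EuclideanSpace ℝ (Fin n)) :
    (G 0 - G x + ε x ≥ μ / 2 * ‖zstar‖ ^ 2 ∧
      μ / 2 * ‖zstar‖ ^ 2 ≥ μ / 4 * ‖x‖ ^ 2 - μ / 2 * ‖x - zstar‖ ^ 2) ∧
    (μ / 2 * ‖x - zstar‖ ^ 2 ≤ ε x) ∧
    (G 0 - G x + 2 * ε x ≥ μ / 4 * ‖x‖ ^ 2) ∧
    (∀ ρh : ℝ, 0 ≤ ρh → ρh < 1 / 4 → ε x ≤ ρh * (μ / 2) * ‖x‖ ^ 2 →
      (2 * ρh / (1 - 4 * ρh)) * (G 0 - G x) ≥ ρh * μ / 2 * ‖x‖ ^ 2 ∧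
        ρh * μ / 2 * ‖x‖ ^ 2 ≥ ε x) := by
  have h0 := strong_growth hsc hmin 0
  have hx := strong_growth hsc hmin x
  have hεx := hε x
  -- norm inequality ‖x‖² ≤ 2‖x - z‖² + 2‖z‖²
  have hnorm : ‖x‖ ^ 2 ≤ 2 * ‖x - zstar‖ ^ 2 + 2 * ‖zstar‖ ^ 2 := by
    have h1 : ‖x‖ ≤ ‖x - zstar‖ + ‖zstar‖ := by
      simpa using norm_add_le (x - zstar) zstar
    nlinarith [norm_nonneg x, norm_nonneg (x - zstar), norm_nonneg zstar,
      sq_nonneg (‖x - zstar‖ - ‖zstar‖)]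
  have h00 : G zstar + μ / 2 * ‖zstar‖ ^ 2 ≤ G 0 := by simpa using h0
  refine ⟨⟨by linarith, by nlinarith⟩, by linarith, by nlinarith, ?_⟩
  intro ρh hρ0 hρ4 hhac
  have hGx : G 0 - G x ≥ (1 - 4 * ρh) / 4 * μ * ‖x‖ ^ 2 := by nlinarith
  have hden : 0 < 1 - 4 * ρh := by linarith
  constructor
  · have h2 : ρh * μ / 2 * ‖x‖ ^ 2 * (1 - 4 * ρh) ≤ 2 * ρh * (G 0 - G x) := by
      nlinarith [sq_nonneg ‖x‖]
    calc ρh * μ / 2 * ‖x‖ ^ 2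
        = ρh * μ / 2 * ‖x‖ ^ 2 * (1 - 4 * ρh) / (1 - 4 * ρh) := by rw [mul_div_cancel_right₀ _ hden.ne']
      _ ≤ 2 * ρh * (G 0 - G x) / (1 - 4 * ρh) := by gcongr
      _ = 2 * ρh / (1 - 4 * ρh) * (G 0 - G x) := by ring
  · calc ε x ≤ ρh * (μ / 2) * ‖x‖ ^ 2 := hhac
    _ = ρh * μ / 2 * ‖x‖ ^ 2 := by ring
end

section
/- Let G: ℝⁿ → ℝ be (1/t)-strongly convex for some t > 0, with 0 < s ≤ t, and let x_t = argmin G_t and x_s = argmin G_s where G_τ(x) = g(x) + (1/(2τ))‖x - x⁰‖₂² for a common convex g and base point x⁰. Then ‖x⁰ - x_s‖₂ ≥ (s/t)·‖x⁰ - x_t‖₂. -/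
open Filter Topology

-- identity: ‖(1-l)•p + l•q‖² = (1-l)‖p‖² + l‖q‖² - l(1-l)‖q-p‖²
lemma combo_norm_sq {n : ℕ} (p q : EuclideanSpace ℝ (Fin n)) (l : ℝ) :
    ‖(1 - l) • p + l • q‖ ^ 2 =
      (1 - l) * ‖p‖ ^ 2 + l * ‖q‖ ^ 2 - l * (1 - l) * ‖q - p‖ ^ 2 := by
  have h1 : ‖(1 - l) • p + l • q‖ ^ 2 = inner ℝ ((1 - l) • p + l • q) ((1 - l) • p + l • q) :=
    (real_inner_self_eq_norm_sq _).symm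
  have h2 : ‖p‖ ^ 2 = inner ℝ p p := (real_inner_self_eq_norm_sq p).symm
  have h3 : ‖q‖ ^ 2 = inner ℝ q q := (real_inner_self_eq_norm_sq q).symm
  have h4 : ‖q - p‖ ^ 2 = inner ℝ (q - p) (q - p) := (real_inner_self_eq_norm_sq _).symm
  rw [h1, h2, h3, h4]
  simp only [inner_add_add_self, inner_sub_sub_self, real_inner_smul_left,
    real_inner_smul_right, real_inner_comm p q]
  ring

lemma strong_min {n : ℕ} (g : EuclideanSpace ℝ (Fin n) → ℝ)
    (hg : ConvexOn ℝ Set.univ g) (x0 z : EuclideanSpace ℝ (Fin n)) (τ : ℝ) (hτ : 0 < τ)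
    (hz : ∀ x, g z + ‖z - x0‖ ^ 2 / (2 * τ) ≤ g x + ‖x - x0‖ ^ 2 / (2 * τ))
    (x : EuclideanSpace ℝ (Fin n)) :
    g z + ‖z - x0‖ ^ 2 / (2 * τ) + ‖x - z‖ ^ 2 / (2 * τ) ≤ g x + ‖x - x0‖ ^ 2 / (2 * τ) := by
  have key : ∀ l : ℝ, l ∈ Set.Ioo (0:ℝ) 1 →
      g z + ‖z - x0‖ ^ 2 / (2 * τ) + (1 - l) * ‖x - z‖ ^ 2 / (2 * τ)
        ≤ g x + ‖x - x0‖ ^ 2 / (2 * τ) := by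
    intro l hl
    obtain ⟨hl0, hl1⟩ := hl
    set w := (1 - l) • z + l • x with hw
    have hgw : g w ≤ (1 - l) * g z + l * g x :=
      hg.2 (Set.mem_univ z) (Set.mem_univ x) (by linarith) (le_of_lt hl0) (by ring)
    have hwx : w - x0 = (1 - l) • (z - x0) + l • (x - x0) := by
      rw [hw]; module
    have hnorm : ‖w - x0‖ ^ 2 =
        (1 - l) * ‖z - x0‖ ^ 2 + l * ‖x - x0‖ ^ 2 - l * (1 - l) * ‖x - z‖ ^ 2 := by
      rw [hwx, combo_norm_sq]
      congr 2
      rw [show (x - x0) - (z - x0) = x - z by abel]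
    have h0 := hz w
    rw [hnorm] at h0
    have hτ' : (0:ℝ) < 2 * τ := by linarith
    have := hz x  -- not needed maybe
    -- h0 : g z + ‖z-x0‖²/(2τ) ≤ g w + ((1-l)A + lB - l(1-l)C)/(2τ)
    have h1 : g z + ‖z - x0‖ ^ 2 / (2 * τ) ≤ (1 - l) * g z + l * g x +
        ((1 - l) * ‖z - x0‖ ^ 2 + l * ‖x - x0‖ ^ 2 - l * (1 - l) * ‖x - z‖ ^ 2) / (2 * τ) := by
      linarith
    -- rearrange: l * (gz + A/(2τ)) + l(1-l)C/(2τ) ≤ l*(gx + B/(2τ))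
    have h2 : l * (g z + ‖z - x0‖ ^ 2 / (2 * τ) + (1 - l) * ‖x - z‖ ^ 2 / (2 * τ))
        ≤ l * (g x + ‖x - x0‖ ^ 2 / (2 * τ)) := by
      have e : ((1 - l) * ‖z - x0‖ ^ 2 + l * ‖x - x0‖ ^ 2 - l * (1 - l) * ‖x - z‖ ^ 2) / (2 * τ)
          = (1 - l) * (‖z - x0‖ ^ 2 / (2 * τ)) + l * (‖x - x0‖ ^ 2 / (2 * τ))
            - l * ((1 - l) * ‖x - z‖ ^ 2 / (2 * τ)) := by
        field_simp <;> ring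
      rw [e] at h1
      nlinarith [h1]
    exact le_of_mul_le_mul_left (by linarith [h2]) hl0
  -- take limit l → 0⁺
  have hmem : Set.Ioo (0:ℝ) 1 ∈ 𝓝[>] (0:ℝ) := by
    apply inter_mem_nhdsWithin
    exact Iio_mem_nhds one_pos
  have hev : ∀ᶠ l in 𝓝[>] (0:ℝ),
      g z + ‖z - x0‖ ^ 2 / (2 * τ) + (1 - l) * ‖x - z‖ ^ 2 / (2 * τ)
        ≤ g x + ‖x - x0‖ ^ 2 / (2 * τ) := by
    filter_upwards [hmem] with l hl using key l hl
  have htend : Tendsto (fun l : ℝ => g z + ‖z - x0‖ ^ 2 / (2 * τ) + (1 - l) * ‖x - z‖ ^ 2 / (2 * τ))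
      (𝓝[>] (0:ℝ)) (𝓝 (g z + ‖z - x0‖ ^ 2 / (2 * τ) + ‖x - z‖ ^ 2 / (2 * τ))) := by
    have : ContinuousAt (fun l : ℝ => g z + ‖z - x0‖ ^ 2 / (2 * τ) + (1 - l) * ‖x - z‖ ^ 2 / (2 * τ)) 0 := by
      fun_prop
    have h := this.tendsto
    simp only [sub_zero, one_mul] at h
    exact h.mono_left nhdsWithin_le_nhds
  exact le_of_tendsto htend hev

/-- Comparison of proximal steps with different step sizes: the distance moved
by the proximal map is at least proportional to the step-size ratio. -/
theorem prox_step_ratio {n : ℕ} (g : EuclideanSpace ℝ (Fin n) → ℝ)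
    (hg : ConvexOn ℝ Set.univ g)
    (x0 xs xt : EuclideanSpace ℝ (Fin n)) (s t : ℝ)
    (hs : 0 < s) (hst : s ≤ t)
    (hxs : ∀ x, g xs + ‖xs - x0‖ ^ 2 / (2 * s) ≤ g x + ‖x - x0‖ ^ 2 / (2 * s))
    (hxt : ∀ x, g xt + ‖xt - x0‖ ^ 2 / (2 * t) ≤ g x + ‖x - x0‖ ^ 2 / (2 * t)) :
    ‖x0 - xs‖ ≥ (s / t) * ‖x0 - xt‖ := by
  have ht : 0 < t := lt_of_lt_of_le hs hst
  have H1 := strong_min g hg x0 xs s hs hxs xt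
  have H2 := strong_min g hg x0 xt t ht hxt xs
  set a := ‖xt - x0‖ with ha
  set b := ‖xs - x0‖ with hb
  have hcs : ‖xs - xt‖ = ‖xt - xs‖ := norm_sub_rev _ _
  set c := ‖xt - xs‖ with hc
  rw [hcs] at H2
  -- H1 : g xs + b²/(2s) + c²/(2s) ≤ g xt + a²/(2s)
  -- H2 : g xt + a²/(2t) + c²/(2t) ≤ g xs + b²/(2t)
  have key : (t + s) * c ^ 2 ≤ (t - s) * (a ^ 2 - b ^ 2) := by
    have h1 : b ^ 2 / (2 * s) + c ^ 2 / (2 * s) + a ^ 2 / (2 * t) + c ^ 2 / (2 * t)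
        ≤ a ^ 2 / (2 * s) + b ^ 2 / (2 * t) := by linarith
    have hs' : (0:ℝ) < 2 * s := by linarith
    have ht' : (0:ℝ) < 2 * t := by linarith
    have h2 := mul_le_mul_of_nonneg_left h1 (le_of_lt (mul_pos hs' ht'))
    have eL : (2*s)*(2*t) * (b^2/(2*s) + c^2/(2*s) + a^2/(2*t) + c^2/(2*t))
        = (b^2+c^2)*(2*t) + (a^2+c^2)*(2*s) := by field_simp <;> ring
    have eR : (2*s)*(2*t) * (a^2/(2*s) + b^2/(2*t)) = a^2*(2*t) + b^2*(2*s) := by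
      field_simp <;> ring
    rw [eL, eR] at h2
    nlinarith [h2]
  have ha0 : 0 ≤ a := norm_nonneg _
  have hb0 : 0 ≤ b := norm_nonneg _
  have hc0 : 0 ≤ c := norm_nonneg _
  have htri : a ≤ c + b := by
    calc a = ‖(xt - xs) + (xs - x0)‖ := by rw [ha]; congr 1; abel
    _ ≤ c + b := norm_add_le _ _
  have goal' : s * a ≤ t * b := by
    rcases le_or_gt a b with h | h
    · nlinarith
    · have hab : 0 < a - b := by linarith
      have hcab : a - b ≤ c := by linarith
      have : (t + s) * (a - b) ^ 2 ≤ (t - s) * (a - b) * (a + b) := by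
        nlinarith [sq_nonneg c, mul_le_mul_of_nonneg_left (mul_le_mul hcab hcab (le_of_lt hab) hc0) (by linarith : (0:ℝ) ≤ t + s)]
      nlinarith [mul_pos hab (show (0:ℝ) < t + s by linarith)]
  rw [norm_sub_rev x0 xs, norm_sub_rev x0 xt, ← hb, ← ha, ge_iff_le, div_mul_eq_mul_div,
    div_le_iff₀ ht]
  linarith [goal']
end

section
/- Let u, v ∈ ℝⁿ and t, t' > 0 with t ≤ t'. If ((1/(2t)) - (1/(2t')))·(‖u‖₂² - ‖v‖₂²) ≥ ((1/(2t)) + (1/(2t')))·‖u - v‖₂², then ‖v‖₂ ≥ (t/t')·‖u‖₂. -/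
/-- Vector inequality: the hypothesis forces `‖v‖ ≥ (t/t')‖u‖`. -/
theorem norm_ratio_of_gap {n : ℕ} (u v : EuclideanSpace ℝ (Fin n)) (t t' : ℝ)
    (ht : 0 < t) (htt : t ≤ t')
    (h : (1 / (2 * t) - 1 / (2 * t')) * (‖u‖ ^ 2 - ‖v‖ ^ 2) ≥
      (1 / (2 * t) + 1 / (2 * t')) * ‖u - v‖ ^ 2) :
    ‖v‖ ≥ (t / t') * ‖u‖ := by
  have ht' : 0 < t' := lt_of_lt_of_le ht htt
  set a := ‖u‖ with ha
  set b := ‖v‖ with hb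
  set d := ‖u - v‖ with hd
  have h1 : a ≤ d + b := by
    calc a = ‖(u - v) + v‖ := by rw [sub_add_cancel]
    _ ≤ d + b := norm_add_le _ _
  have hb0 : 0 ≤ b := norm_nonneg v
  have hd0 : 0 ≤ d := norm_nonneg _
  -- multiply hypothesis by 2 t t'
  have key : (t' - t) * (a ^ 2 - b ^ 2) ≥ (t' + t) * d ^ 2 := by
    have h2 := mul_le_mul_of_nonneg_left h.le (by positivity : (0:ℝ) ≤ 2 * t * t')
    have e1 : 2 * t * t' * (1 / (2 * t) - 1 / (2 * t')) = t' - t := by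
      field_simp
    have e2 : 2 * t * t' * (1 / (2 * t) + 1 / (2 * t')) = t' + t := by
      field_simp
    calc (t' + t) * d ^ 2 = 2 * t * t' * ((1 / (2 * t) + 1 / (2 * t')) * d ^ 2) := by
          rw [← mul_assoc, e2]
      _ ≤ 2 * t * t' * ((1 / (2 * t) - 1 / (2 * t')) * (a ^ 2 - b ^ 2)) := h2
      _ = (t' - t) * (a ^ 2 - b ^ 2) := by rw [← mul_assoc, e1]
  have ha0 : 0 ≤ a := norm_nonneg u
  have h1' : b ≤ d + a := by
    calc b = ‖(v - u) + u‖ := by rw [sub_add_cancel]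
    _ ≤ ‖v - u‖ + a := norm_add_le _ _
    _ = d + a := by rw [norm_sub_rev]
  have habs : |a - b| ≤ d := abs_le.2 ⟨by linarith, by linarith⟩
  have hsq : (a - b) ^ 2 ≤ d ^ 2 := by
    calc (a - b) ^ 2 = |a - b| ^ 2 := (sq_abs _).symm
      _ ≤ d ^ 2 := by gcongr
  have hsq' : (t' + t) * (a - b) ^ 2 ≤ (t' + t) * d ^ 2 :=
    mul_le_mul_of_nonneg_left hsq (by linarith)
  have key2 : 0 ≤ (a - b) * (t' * b - t * a) := by nlinarith [key, hsq']
  have hmain : t * a ≤ t' * b := by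
    rcases le_or_gt a b with hc | hc
    · nlinarith
    · nlinarith [key2]
  rw [ge_iff_le, div_mul_eq_mul_div, div_le_iff₀ ht']
  linarith
end
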